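/- Let α ∈ ℤ_{≥0}^n be a weakly increasing composition (α_1 ≤ α_2 ≤ ⋯ ≤ α_n), and let λ be the partition obtained by rearranging the parts of α decreasingly. Then for β ∈ ℤ_{≥0}^n, β ≤_κ α if and only if β is a rearrangement of some partition μ with μ ⊴ λ in the dominance order. -/

import Mathlib

/-- One move generating the order `≤_κ`: from `γ` we may pass to `t_{i,j} γ`
(exchange the `i`-th and `j`-th entries) provided `γ i < γ j`, or to
`m_{i,j} γ = γ + e_i - e_j` provided `γ i < γ j - 1`. -/
def KeyStep (n : ℕ) (γ δ : Fin n → ℕ) : Prop :=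
  ∃ i j : Fin n, i < j ∧
    ((γ i < γ j ∧ δ = γ ∘ Equiv.swap i j) ∨
     (γ i + 1 < γ j ∧
       δ = Function.update (Function.update γ i (γ i + 1)) j (γ j - 1)))

/-- `β ≤_κ α` : `β` is obtained from `α` by a finite sequence of moves. -/
def KeyLe (n : ℕ) (β α : Fin n → ℕ) : Prop :=
  Relation.ReflTransGen (KeyStep n) α β

/-- Dominance order: `μ ⊴ lam` iff all partial sums of `μ` are at most those of `lam`
and the total sums agree. -/
def Dominates (n : ℕ) (μ lam : Fin n → ℕ) : Prop :=
  (∀ i : Fin n, ∑ k ∈ Finset.Iic i, μ k ≤ ∑ k ∈ Finset.Iic i, lam k) ∧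
    ∑ k, μ k = ∑ k, lam k

open Finset

/-- The first `k` elements of `Fin n`. -/
def fstK (n k : ℕ) : Finset (Fin n) := Finset.univ.filter fun i => (i : ℕ) < k

/-- Max over `k`-subsets of the sum of entries. -/
def pF {n : ℕ} (γ : Fin n → ℕ) (k : ℕ) : ℕ :=
  (Finset.powersetCard k (Finset.univ : Finset (Fin n))).sup fun T => ∑ i ∈ T, γ i

variable {n : ℕ}

lemma le_pF {γ : Fin n → ℕ} {k : ℕ} {T : Finset (Fin n)} (hT : T.card = k) :
    ∑ i ∈ T, γ i ≤ pF γ k :=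
  Finset.le_sup (f := fun T => ∑ i ∈ T, γ i) (Finset.mem_powersetCard_univ.2 hT)

lemma pF_le {γ : Fin n → ℕ} {k m : ℕ}
    (h : ∀ T : Finset (Fin n), T.card = k → ∑ i ∈ T, γ i ≤ m) : pF γ k ≤ m :=
  Finset.sup_le fun T hT => h T (Finset.mem_powersetCard_univ.1 hT)

lemma pF_gt {γ : Fin n → ℕ} {k : ℕ} (hk : n < k) : pF γ k = 0 := by
  unfold pF
  rw [Finset.powersetCard_eq_empty.2 (by simpa using hk), Finset.sup_empty]
  rfl

lemma pF_comp_perm_le (γ : Fin n → ℕ) (σ : Equiv.Perm (Fin n)) (k : ℕ) :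
    pF (γ ∘ σ) k ≤ pF γ k := by
  apply pF_le
  intro T hT
  have : ∑ i ∈ T, γ (σ i) = ∑ j ∈ T.image σ, γ j :=
    (Finset.sum_image (by intro x _ y _ h; exact σ.injective h)).symm
  rw [Function.comp_def, this]
  exact le_pF (by rw [Finset.card_image_of_injective _ σ.injective, hT])

lemma pF_comp_perm (γ : Fin n → ℕ) (σ : Equiv.Perm (Fin n)) (k : ℕ) :
    pF (γ ∘ σ) k = pF γ k := by
  refine le_antisymm (pF_comp_perm_le γ σ k) ?_
  have h2 := pF_comp_perm_le (γ ∘ σ) σ.symm k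
  have : (γ ∘ σ) ∘ σ.symm = γ := by
    funext x; simp
  rwa [this] at h2

lemma fstK_eq_image {k : ℕ} (hk : k ≤ n) :
    fstK n k = Finset.image (Fin.castLE hk) Finset.univ := by
  ext x
  simp only [fstK, Finset.mem_filter, Finset.mem_univ, true_and, Finset.mem_image]
  constructor
  · intro hx; exact ⟨⟨x, hx⟩, rfl⟩
  · rintro ⟨i, rfl⟩; exact i.isLt

lemma fstK_card {k : ℕ} (hk : k ≤ n) : (fstK n k).card = k := by
  rw [fstK_eq_image hk,
    Finset.card_image_of_injective _ (Fin.castLE_injective hk),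
    Finset.card_univ, Fintype.card_fin]

lemma mem_fstK {k : ℕ} {x : Fin n} : x ∈ fstK n k ↔ (x : ℕ) < k := by
  simp [fstK]

lemma fstK_univ : fstK n n = Finset.univ := by
  ext x; simp [fstK, x.isLt]

lemma strictMono_nat_le {k : ℕ} {f : Fin k → ℕ} (hf : StrictMono f) :
    ∀ i : Fin k, (i : ℕ) ≤ f i := by
  have key : ∀ m : ℕ, ∀ i : Fin k, (i : ℕ) = m → m ≤ f i := by
    intro m
    induction m with
    | zero => intro i _; exact Nat.zero_le _
    | succ m ih =>
      intro i hi
      have hm : m < k := by omega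
      have h1 := ih ⟨m, hm⟩ rfl
      have h2 : f ⟨m, hm⟩ < f i := hf (by simp [Fin.lt_def, hi])
      omega
  intro i; exact key _ i rfl

lemma sum_le_sum_fstK {ν : Fin n → ℕ} (hν : Antitone ν) {k : ℕ} (hk : k ≤ n)
    {T : Finset (Fin n)} (hT : T.card = k) :
    ∑ i ∈ T, ν i ≤ ∑ i ∈ fstK n k, ν i := by
  classical
  set e := T.orderEmbOfFin hT with he
  have hTimg : T = Finset.image e Finset.univ := by
    ext x
    simp only [Finset.mem_image, Finset.mem_univ, true_and]
    constructor
    · intro hx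
      have : x ∈ Set.range e := by rw [Finset.range_orderEmbOfFin]; exact hx
      obtain ⟨i, hi⟩ := this; exact ⟨i, hi⟩
    · rintro ⟨i, rfl⟩; exact Finset.orderEmbOfFin_mem T hT i
  rw [hTimg, fstK_eq_image hk,
    Finset.sum_image (by intro x _ y _ h; exact e.injective h),
    Finset.sum_image (by intro x _ y _ h; exact Fin.castLE_injective hk h)]
  apply Finset.sum_le_sum
  intro i _
  apply hν
  have h1 : (i : ℕ) ≤ (e i : ℕ) :=
    strictMono_nat_le (fun a b hab => by exact_mod_cast e.strictMono hab) i
  rw [Fin.le_def]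
  simpa using h1

lemma pF_antitone {ν : Fin n → ℕ} (hν : Antitone ν) {k : ℕ} (hk : k ≤ n) :
    pF ν k = ∑ i ∈ fstK n k, ν i :=
  le_antisymm (pF_le fun _ hT => sum_le_sum_fstK hν hk hT) (le_pF (fstK_card hk))


lemma keyStep_sum {γ δ : Fin n → ℕ} (h : KeyStep n γ δ) :
    ∑ i, δ i = ∑ i, γ i := by
  obtain ⟨i, j, hij, h | h⟩ := h
  · rw [h.2]
    exact Equiv.sum_comp (Equiv.swap i j) γ
  · obtain ⟨hlt, hd⟩ := h
    have hne : i ≠ j := ne_of_lt hij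
    have hje : (j : Fin n) ∈ (Finset.univ : Finset (Fin n)) := Finset.mem_univ _
    have hie : (i : Fin n) ∈ (Finset.univ : Finset (Fin n)) \ {j} := by
      simp [hne]
    rw [hd, Finset.sum_update_of_mem hje, Finset.sum_update_of_mem hie]
    have h1 : ∑ x ∈ Finset.univ, γ x
        = γ j + ∑ x ∈ Finset.univ \ {j}, γ x := by
      rw [← Finset.sum_update_of_mem hje]
      congr 1
      exact (Function.update_eq_self j γ).symm
    have h2 : ∑ x ∈ Finset.univ \ {j}, γ x
        = γ i + ∑ x ∈ (Finset.univ \ {j}) \ {i}, γ x := by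
      rw [← Finset.sum_update_of_mem hie]
      congr 1
      exact (Function.update_eq_self i γ).symm
    omega

lemma keyStep_pF {γ δ : Fin n → ℕ} (h : KeyStep n γ δ) (k : ℕ) :
    pF δ k ≤ pF γ k := by
  obtain ⟨i, j, hij, h | h⟩ := h
  · rw [h.2, pF_comp_perm]
  · obtain ⟨hlt, hd⟩ := h
    have hne : i ≠ j := ne_of_lt hij
    apply pF_le
    intro T hT
    by_cases hjT : j ∈ T
    · have hsum : ∑ x ∈ T, δ x
          = (γ j - 1) + ∑ x ∈ T \ {j}, Function.update γ i (γ i + 1) x := by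
        rw [hd, Finset.sum_update_of_mem hjT]
      by_cases hiT : i ∈ T
      · have hiT' : i ∈ T \ {j} := by simp [hiT, hne]
        rw [hsum, Finset.sum_update_of_mem hiT']
        have h1 : ∑ x ∈ T, γ x = γ j + ∑ x ∈ T \ {j}, γ x := by
          rw [← Finset.sum_update_of_mem hjT]
          congr 1; exact (Function.update_eq_self j γ).symm
        have h2 : ∑ x ∈ T \ {j}, γ x = γ i + ∑ x ∈ (T \ {j}) \ {i}, γ x := by
          rw [← Finset.sum_update_of_mem hiT']
          congr 1; exact (Function.update_eq_self i γ).symm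
        have h3 := le_pF (γ := γ) hT
        omega
      · have : ∑ x ∈ T \ {j}, Function.update γ i (γ i + 1) x
            = ∑ x ∈ T \ {j}, γ x := by
          apply Finset.sum_congr rfl
          intro x hx
          have : x ≠ i := by
            intro hxi; subst hxi; exact hiT (Finset.mem_sdiff.1 hx).1
          rw [Function.update_of_ne this]
        rw [hsum, this]
        have h1 : ∑ x ∈ T, γ x = γ j + ∑ x ∈ T \ {j}, γ x := by
          rw [← Finset.sum_update_of_mem hjT]
          congr 1; exact (Function.update_eq_self j γ).symm
        have h3 := le_pF (γ := γ) hT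
        omega
    · have hdT : ∑ x ∈ T, δ x = ∑ x ∈ T, Function.update γ i (γ i + 1) x := by
        rw [hd]
        apply Finset.sum_congr rfl
        intro x hx
        have : x ≠ j := fun hxj => hjT (hxj ▸ hx)
        rw [Function.update_of_ne this]
      by_cases hiT : i ∈ T
      · -- replace i by j
        have hk1 : 1 ≤ k := by
          rw [← hT]; exact Finset.card_pos.2 ⟨i, hiT⟩
        set T' : Finset (Fin n) := insert j (T.erase i) with hT'
        have hjT' : j ∉ T.erase i := fun hj => hjT (Finset.mem_of_mem_erase hj)
        have hcard : T'.card = k := by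
          rw [hT', Finset.card_insert_of_notMem hjT',
            Finset.card_erase_of_mem hiT, hT]
          omega
        have hsum' : ∑ x ∈ T', γ x = γ j + ∑ x ∈ T.erase i, γ x :=
          Finset.sum_insert hjT'
        have hsumT : ∑ x ∈ T, γ x = γ i + ∑ x ∈ T.erase i, γ x :=
          (Finset.add_sum_erase T γ hiT).symm
        have hupdT : ∑ x ∈ T, Function.update γ i (γ i + 1) x
            = (γ i + 1) + ∑ x ∈ T \ {i}, γ x :=
          Finset.sum_update_of_mem hiT γ (γ i + 1)
        have herase : T \ {i} = T.erase i := by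
          rw [Finset.sdiff_singleton_eq_erase]
        have h3 := le_pF (γ := γ) hcard
        rw [hdT, hupdT, herase]
        omega
      · have : ∑ x ∈ T, Function.update γ i (γ i + 1) x = ∑ x ∈ T, γ x := by
          apply Finset.sum_congr rfl
          intro x hx
          have : x ≠ i := fun hxi => hiT (hxi ▸ hx)
          rw [Function.update_of_ne this]
        rw [hdT, this]
        exact le_pF hT

lemma comp_swap_eq_update (γ : Fin n → ℕ) {i j : Fin n} (hij : i ≠ j) :
    γ ∘ Equiv.swap i j = Function.update (Function.update γ i (γ j)) j (γ i) := by
  funext x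
  by_cases hxj : x = j
  · subst hxj
    simp [Equiv.swap_apply_right]
  · by_cases hxi : x = i
    · subst hxi
      rw [Function.comp_apply, Equiv.swap_apply_left, Function.update_of_ne hij,
        Function.update_self]
    · rw [Function.comp_apply, Equiv.swap_apply_of_ne_of_ne hxi hxj,
        Function.update_of_ne hxj, Function.update_of_ne hxi]

/-- weight used for the sorting induction -/
def wgt {n : ℕ} (β : Fin n → ℕ) : ℕ := ∑ i : Fin n, (i : ℕ) * β i

lemma wgt_le (β : Fin n → ℕ) : wgt β ≤ (n - 1) * ∑ i, β i := by
  unfold wgt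
  rw [Finset.mul_sum]
  apply Finset.sum_le_sum
  intro i _
  exact Nat.mul_le_mul_right _ (by have := i.isLt; omega)

lemma monotone_of_adjacent {f : Fin n → ℕ}
    (h : ∀ (a : ℕ) (h1 : a + 1 < n), f ⟨a, by omega⟩ ≤ f ⟨a + 1, h1⟩) :
    Monotone f := by
  have key : ∀ (d a : ℕ) (hd : a + d < n), f ⟨a, by omega⟩ ≤ f ⟨a + d, hd⟩ := by
    intro d
    induction d with
    | zero => intro a hd; exact le_of_eq rfl
    | succ d ih =>
      intro a hd
      have h1 : a + d < n := by omega
      calc f ⟨a, by omega⟩ ≤ f ⟨a + d, h1⟩ := ih a h1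
        _ ≤ f ⟨a + d + 1, by omega⟩ := h (a + d) (by omega)
        _ = f ⟨a + (d + 1), hd⟩ := rfl
  intro x y hxy
  have hx : x = (⟨(x : ℕ), x.isLt⟩ : Fin n) := rfl
  have hy : y = (⟨(x : ℕ) + ((y : ℕ) - (x : ℕ)), by omega⟩ : Fin n) := by
    apply Fin.ext
    simp only []
    omega
  rw [hx, hy]
  exact key _ _ _

lemma descent_wgt {β : Fin n → ℕ} {i j : Fin n} (hij : i < j)
    (hβ : β j < β i) : wgt β < wgt (β ∘ Equiv.swap i j) := by
  have hne : i ≠ j := ne_of_lt hij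
  have hje : (j : Fin n) ∈ (Finset.univ : Finset (Fin n)) := Finset.mem_univ _
  have hie : (i : Fin n) ∈ (Finset.univ : Finset (Fin n)) \ {j} := by simp [hne]
  have hupd : (fun x : Fin n => (x : ℕ) * (β ∘ Equiv.swap i j) x)
      = Function.update (Function.update (fun x : Fin n => (x : ℕ) * β x)
          i ((i : ℕ) * β j)) j ((j : ℕ) * β i) := by
    rw [comp_swap_eq_update β hne]
    funext x
    by_cases hxj : x = j
    · subst hxj; simp
    · by_cases hxi : x = i
      · subst hxi
        rw [Function.update_of_ne hxj, Function.update_of_ne hxj,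
          Function.update_self, Function.update_self]
      · rw [Function.update_of_ne hxj, Function.update_of_ne hxi,
          Function.update_of_ne hxj, Function.update_of_ne hxi]
  unfold wgt
  rw [hupd, Finset.sum_update_of_mem hje, Finset.sum_update_of_mem hie]
  have h1 : ∑ x : Fin n, (x : ℕ) * β x
      = (j : ℕ) * β j + ∑ x ∈ Finset.univ \ {j}, (x : ℕ) * β x := by
    rw [← Finset.sum_update_of_mem hje]
    congr 1
    exact (Function.update_eq_self j _).symm
  have h2 : ∑ x ∈ Finset.univ \ {j}, (x : ℕ) * β x
      = (i : ℕ) * β i + ∑ x ∈ (Finset.univ \ {j}) \ {i}, (x : ℕ) * β x := by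
    rw [← Finset.sum_update_of_mem hie]
    congr 1
    exact (Function.update_eq_self i _).symm
  rw [h1, h2]
  have hvij : (i : ℕ) < (j : ℕ) := hij
  obtain ⟨d, hd⟩ : ∃ d, (j : ℕ) = (i : ℕ) + d + 1 := ⟨(j : ℕ) - (i : ℕ) - 1, by omega⟩
  obtain ⟨c, hc⟩ : ∃ c, β i = β j + c + 1 := ⟨β i - β j - 1, by omega⟩
  rw [hd, hc]
  ring_nf
  omega

lemma sort_reach {γ : Fin n → ℕ} (hγ : Monotone γ) :
    ∀ (m : ℕ) (β : Fin n → ℕ) (σ : Equiv.Perm (Fin n)), β = γ ∘ σ →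
      (n - 1) * (∑ i, γ i) - wgt β ≤ m → KeyLe n β γ := by
  intro m
  induction m using Nat.strong_induction_on with
  | _ m ih =>
    intro β σ hβ hm
    by_cases hmon : Monotone β
    · have h1 : Monotone (γ ∘ σ) := hβ ▸ hmon
      have h2 : Monotone (γ ∘ (Equiv.refl (Fin n))) := by
        simpa using hγ
      have h3 : γ ∘ σ = γ ∘ (Equiv.refl (Fin n)) := Tuple.unique_monotone h1 h2
      have h4 : β = γ := by
        rw [hβ, h3]; funext x; simp
      rw [h4]
      exact Relation.ReflTransGen.refl
    · skip
      have hdesc : ∃ (a : ℕ) (h1 : a + 1 < n),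
          β ⟨a + 1, h1⟩ < β ⟨a, by omega⟩ := by
        by_contra hcon
        push_neg at hcon
        exact hmon (monotone_of_adjacent fun a h1 => hcon a h1)
      obtain ⟨a, h1, hlt⟩ := hdesc
      set i : Fin n := ⟨a, by omega⟩ with hi
      set j : Fin n := ⟨a + 1, h1⟩ with hj
      have hij : i < j := by simp [hi, hj, Fin.lt_def]
      set β' := β ∘ Equiv.swap i j with hβ'
      have hstep : KeyStep n β' β := by
        refine ⟨i, j, hij, Or.inl ⟨?_, ?_⟩⟩
        · show β (Equiv.swap i j i) < β (Equiv.swap i j j)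
          rw [Equiv.swap_apply_left, Equiv.swap_apply_right]
          exact hlt
        · funext x
          show β x = β (Equiv.swap i j (Equiv.swap i j x))
          rw [Equiv.swap_apply_self]
      have hβ'2 : β' = γ ∘ ((Equiv.swap i j).trans σ) := by
        rw [hβ', hβ]; funext x; simp
      have hwlt : wgt β < wgt β' := descent_wgt hij hlt
      have hsum' : ∑ x, β' x = ∑ x, γ x := by
        rw [hβ'2]
        exact Equiv.sum_comp ((Equiv.swap i j).trans σ) γ
      have hwb : wgt β' ≤ (n - 1) * ∑ x, γ x := by
        have := wgt_le β'
        rwa [hsum'] at this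
      have hm' : (n - 1) * (∑ x, γ x) - wgt β' < m := by omega
      have hrec : KeyLe n β' γ :=
        ih _ hm' β' ((Equiv.swap i j).trans σ) hβ'2 le_rfl
      exact Relation.ReflTransGen.tail hrec hstep

lemma fstK_succ {k : ℕ} (hk : k < n) :
    fstK n (k + 1) = insert ⟨k, hk⟩ (fstK n k) := by
  ext x
  simp only [mem_fstK, Finset.mem_insert, Fin.ext_iff]
  omega

lemma Iic_eq_fstK (i : Fin n) : Finset.Iic i = fstK n ((i : ℕ) + 1) := by
  ext x
  simp only [Finset.mem_Iic, mem_fstK, Fin.le_def]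
  omega

lemma main_reach : ∀ (N : ℕ) (γ β : Fin n → ℕ), Monotone γ →
    (∀ k, pF β k ≤ pF γ k) → (∑ i, β i = ∑ i, γ i) →
    ∑ k ∈ Finset.range (n + 1), pF γ k ≤ N → KeyLe n β γ := by
  intro N
  induction N using Nat.strong_induction_on with
  | _ N ih =>
  intro γ β hγ hpFle hsum hΦ
  classical
  set lam : Fin n → ℕ := fun k => γ k.rev with hlamdef
  have hlam_anti : Antitone lam := fun x y hxy => hγ (Fin.rev_le_rev.mpr hxy)
  have hlamγ : γ ∘ ⇑(Fin.revPerm) = lam := by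
    funext x; simp [hlamdef]
  have hpFlam : ∀ k, pF lam k = pF γ k := by
    intro k; rw [← hlamγ, pF_comp_perm]
  have hsumlam : ∑ i, lam i = ∑ i, γ i := by
    rw [← hlamγ]; exact Equiv.sum_comp Fin.revPerm γ
  set μ : Fin n → ℕ := fun k => (β ∘ ⇑(Tuple.sort β)) k.rev with hμdef
  have hμ_anti : Antitone μ := fun x y hxy =>
    (Tuple.monotone_sort β) (Fin.rev_le_rev.mpr hxy)
  set σ₀ : Equiv.Perm (Fin n) := ((Tuple.sort β).symm).trans Fin.revPerm with hσ₀
  have hβμ : β = μ ∘ ⇑σ₀ := by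
    funext x
    simp [hμdef, hσ₀, Fin.rev_rev]
  have hpFμ : ∀ k, pF μ k = pF β k := by
    intro k; conv_rhs => rw [hβμ]
    rw [pF_comp_perm]
  have hsumμ : ∑ i, μ i = ∑ i, β i := by
    conv_rhs => rw [hβμ]
    exact (Equiv.sum_comp σ₀ μ).symm
  by_cases heq : μ = lam
  · have hβγ : β = γ ∘ ⇑(σ₀.trans Fin.revPerm) := by
      rw [hβμ, heq]
      funext x
      simp [hlamdef]
    exact sort_reach hγ _ β _ hβγ le_rfl
  · -- partial sums facts
    have hP : ∀ k, k ≤ n → ∑ i ∈ fstK n k, μ i ≤ ∑ i ∈ fstK n k, lam i := by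
      intro k hk
      rw [← pF_antitone hμ_anti hk, ← pF_antitone hlam_anti hk, hpFμ, hpFlam]
      exact hpFle k
    have htot : ∑ i, μ i = ∑ i, lam i := by rw [hsumμ, hsumlam, hsum]
    -- the first index where μ and lam differ
    set Da : Finset (Fin n) := Finset.univ.filter (fun t => μ t ≠ lam t) with hDadef
    have hDa : Da.Nonempty := by
      rw [Finset.filter_nonempty_iff]
      by_contra h
      push_neg at h
      exact heq (funext fun t => h t (Finset.mem_univ t))
    set a : Fin n := Da.min' hDa with hadef
    have haprop : μ a ≠ lam a := (Finset.mem_filter.1 (Da.min'_mem hDa)).2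
    have hamin : ∀ t, t < a → μ t = lam t := by
      intro t ht
      by_contra hc
      exact absurd (Da.min'_le t (Finset.mem_filter.2 ⟨Finset.mem_univ _, hc⟩)) (not_le.2 ht)
    have hpre : ∀ k, k ≤ (a : ℕ) → ∑ i ∈ fstK n k, μ i = ∑ i ∈ fstK n k, lam i := by
      intro k hk
      apply Finset.sum_congr rfl
      intro x hx
      rw [mem_fstK] at hx
      exact hamin x (by rw [Fin.lt_def]; omega)
    have hμa_lt : μ a < lam a := by
      have h1 := hP ((a : ℕ) + 1) a.isLt
      rw [fstK_succ a.isLt] at h1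
      have hnot : (⟨(a : ℕ), a.isLt⟩ : Fin n) ∉ fstK n (a : ℕ) := by
        simp [mem_fstK]
      rw [Finset.sum_insert hnot, Finset.sum_insert hnot] at h1
      have ha' : (⟨(a : ℕ), a.isLt⟩ : Fin n) = a := rfl
      rw [ha'] at h1
      have := hpre (a : ℕ) le_rfl
      omega
    -- the first index after a where μ exceeds lam
    set Db : Finset (Fin n) := Finset.univ.filter (fun t => a < t ∧ lam t < μ t) with hDbdef
    have hDb : Db.Nonempty := by
      rw [Finset.filter_nonempty_iff]
      by_contra h
      push_neg at h
      have hlt : ∑ i, μ i < ∑ i, lam i := by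
        apply Finset.sum_lt_sum
        · intro i _
          rcases lt_trichotomy i a with h1 | h1 | h1
          · exact le_of_eq (hamin i h1)
          · subst h1; exact le_of_lt hμa_lt
          · exact h i (Finset.mem_univ i) h1
        · exact ⟨a, Finset.mem_univ a, hμa_lt⟩
      omega
    set b : Fin n := Db.min' hDb with hbdef
    have hbprop : a < b ∧ lam b < μ b := (Finset.mem_filter.1 (Db.min'_mem hDb)).2
    obtain ⟨hab, hblt⟩ := hbprop
    have hbmin : ∀ t, a < t → t < b → μ t ≤ lam t := by
      intro t h1 h2
      by_contra hc
      exact absurd (Db.min'_le t (Finset.mem_filter.2 ⟨Finset.mem_univ _, h1, not_le.1 hc⟩))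
        (not_le.2 h2)
    have hstrict : ∀ t : Fin n, a ≤ t → t < b →
        ∑ i ∈ fstK n ((t : ℕ) + 1), μ i < ∑ i ∈ fstK n ((t : ℕ) + 1), lam i := by
      intro t hat htb
      apply Finset.sum_lt_sum
      · intro x hx
        rw [mem_fstK] at hx
        rcases lt_trichotomy x a with h1 | h1 | h1
        · exact le_of_eq (hamin x h1)
        · subst h1; exact le_of_lt hμa_lt
        · refine hbmin x h1 ?_
          rw [Fin.lt_def] at htb ⊢
          rw [Fin.le_def] at hat
          omega
      · refine ⟨a, ?_, hμa_lt⟩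
        rw [mem_fstK]
        rw [Fin.le_def] at hat
        omega
    have h2ab : lam b + 2 ≤ lam a := by
      have hμba : μ b ≤ μ a := hμ_anti (le_of_lt hab)
      omega
    -- r and s
    set Dr : Finset (Fin n) := Finset.univ.filter (fun t => lam t = lam a) with hDrdef
    have hDr : Dr.Nonempty := ⟨a, Finset.mem_filter.2 ⟨Finset.mem_univ _, rfl⟩⟩
    set r : Fin n := Dr.max' hDr with hrdef
    have hra : a ≤ r := Dr.le_max' a (Finset.mem_filter.2 ⟨Finset.mem_univ _, rfl⟩)
    have hlamr : lam r = lam a := (Finset.mem_filter.1 (Dr.max'_mem hDr)).2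
    have hrlt : ∀ t, r < t → lam t < lam a := by
      intro t ht
      have hle : lam t ≤ lam a := hlam_anti (le_trans hra (le_of_lt ht))
      rcases eq_or_lt_of_le hle with h1 | h1
      · exfalso
        exact absurd (Dr.le_max' t (Finset.mem_filter.2 ⟨Finset.mem_univ _, h1⟩))
          (not_le.2 ht)
      · exact h1
    set Ds : Finset (Fin n) := Finset.univ.filter (fun t => lam t = lam b) with hDsdef
    have hDs : Ds.Nonempty := ⟨b, Finset.mem_filter.2 ⟨Finset.mem_univ _, rfl⟩⟩
    set s : Fin n := Ds.min' hDs with hsdef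
    have hsb : s ≤ b := Ds.min'_le b (Finset.mem_filter.2 ⟨Finset.mem_univ _, rfl⟩)
    have hlams : lam s = lam b := (Finset.mem_filter.1 (Ds.min'_mem hDs)).2
    have hslt : ∀ t, t < s → lam b < lam t := by
      intro t ht
      have hle : lam b ≤ lam t := hlam_anti (le_trans (le_of_lt ht) hsb)
      rcases eq_or_lt_of_le hle with h1 | h1
      · exfalso
        exact absurd (Ds.min'_le t (Finset.mem_filter.2 ⟨Finset.mem_univ _, h1.symm⟩))
          (not_le.2 ht)
      · exact h1
    have hrs : r < s := by
      by_contra hc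
      have : lam r ≤ lam s := hlam_anti (not_lt.1 hc)
      rw [hlamr, hlams] at this
      omega
    have hrs_ne : r ≠ s := ne_of_lt hrs
    -- the new partition lam'
    set lam' : Fin n → ℕ :=
      Function.update (Function.update lam r (lam r - 1)) s (lam s + 1) with hlam'def
    have hlam's : lam' s = lam b + 1 := by
      rw [hlam'def, Function.update_self, hlams]
    have hlam'r : lam' r = lam a - 1 := by
      rw [hlam'def, Function.update_of_ne hrs_ne, Function.update_self, hlamr]
    have hlam'o : ∀ x, x ≠ r → x ≠ s → lam' x = lam x := by
      intro x h1 h2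
      rw [hlam'def, Function.update_of_ne h2, Function.update_of_ne h1]
    have hlam'_anti : Antitone lam' := by
      intro x y hxy
      rcases eq_or_lt_of_le hxy with rfl | hlt
      · exact le_rfl
      by_cases hxr : x = r
      · subst hxr
        by_cases hys : y = s
        · subst hys; rw [hlam'r, hlam's]; omega
        · have hyr : r < y := hlt
          rw [hlam'o y (ne_of_gt hyr) hys, hlam'r]
          have := hrlt y hyr
          omega
      · by_cases hxs : x = s
        · have hys : y ≠ s := by
            intro h
            rw [hxs, h] at hlt
            exact lt_irrefl s hlt
          have hyr : y ≠ r := by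
            intro h
            rw [hxs, h] at hlt
            exact absurd (hrs.trans hlt) (lt_irrefl r)
          rw [hlam'o y hyr hys, hxs, hlam's]
          have h1 : lam y ≤ lam s := hlam_anti (le_of_lt (hxs ▸ hlt))
          rw [hlams] at h1
          omega
        · rw [hlam'o x hxr hxs]
          by_cases hyr : y = r
          · subst hyr
            rw [hlam'r]
            have h1 : lam r ≤ lam x := hlam_anti (le_of_lt hlt)
            omega
          · by_cases hys : y = s
            · subst hys
              rw [hlam's]
              have := hslt x hlt
              omega
            · rw [hlam'o y hyr hys]
              exact hlam_anti hxy
    have hsum_rs : ∀ k, (r : ℕ) < k → (s : ℕ) < k →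
        ∑ i ∈ fstK n k, lam' i = ∑ i ∈ fstK n k, lam i := by
      intro k hrk hsk
      have hsS : s ∈ fstK n k := mem_fstK.2 hsk
      have hrS : r ∈ fstK n k \ {s} := by
        rw [Finset.mem_sdiff, Finset.mem_singleton]
        exact ⟨mem_fstK.2 hrk, hrs_ne⟩
      rw [hlam'def, Finset.sum_update_of_mem hsS, Finset.sum_update_of_mem hrS]
      have h1 : ∑ x ∈ fstK n k, lam x = lam s + ∑ x ∈ fstK n k \ {s}, lam x := by
        rw [← Finset.sum_update_of_mem hsS]
        congr 1
        exact (Function.update_eq_self s lam).symm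
      have h2 : ∑ x ∈ fstK n k \ {s}, lam x
          = lam r + ∑ x ∈ (fstK n k \ {s}) \ {r}, lam x := by
        rw [← Finset.sum_update_of_mem hrS]
        congr 1
        exact (Function.update_eq_self r lam).symm
      have h3 : 2 ≤ lam r := by rw [hlamr]; omega
      omega
    have hsum_r : ∀ k, (r : ℕ) < k → ¬ (s : ℕ) < k →
        ∑ i ∈ fstK n k, lam' i + 1 = ∑ i ∈ fstK n k, lam i := by
      intro k hrk hsk
      have hrS : r ∈ fstK n k := mem_fstK.2 hrk
      have h0 : ∑ i ∈ fstK n k, lam' i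
          = ∑ i ∈ fstK n k, Function.update lam r (lam r - 1) i := by
        apply Finset.sum_congr rfl
        intro x hx
        rw [hlam'def]
        apply Function.update_of_ne
        intro hxs
        rw [hxs] at hx
        exact hsk (mem_fstK.1 hx)
      rw [h0, Finset.sum_update_of_mem hrS]
      have h1 : ∑ x ∈ fstK n k, lam x = lam r + ∑ x ∈ fstK n k \ {r}, lam x := by
        rw [← Finset.sum_update_of_mem hrS]
        congr 1
        exact (Function.update_eq_self r lam).symm
      have h3 : 2 ≤ lam r := by rw [hlamr]; omega
      omega
    have hsum_nr : ∀ k, ¬ (r : ℕ) < k →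
        ∑ i ∈ fstK n k, lam' i = ∑ i ∈ fstK n k, lam i := by
      intro k hrk
      apply Finset.sum_congr rfl
      intro x hx
      rw [mem_fstK] at hx
      have hrsv : (r : ℕ) < (s : ℕ) := Fin.lt_def.mp hrs
      have hxr : x ≠ r := by
        intro h
        rw [h] at hx
        exact hrk hx
      have hxs : x ≠ s := by
        intro h
        rw [h] at hx
        omega
      exact hlam'o x hxr hxs
    have hμlam' : ∀ k, k ≤ n → ∑ i ∈ fstK n k, μ i ≤ ∑ i ∈ fstK n k, lam' i := by
      intro k hk
      by_cases hrk : (r : ℕ) < k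
      · by_cases hsk : (s : ℕ) < k
        · rw [hsum_rs k hrk hsk]
          exact hP k hk
        · have hra' : (a : ℕ) ≤ (r : ℕ) := Fin.le_def.mp hra
          have hsb' : (s : ℕ) ≤ (b : ℕ) := Fin.le_def.mp hsb
          have hklt : k - 1 < n := by omega
          have hat : a ≤ (⟨k - 1, hklt⟩ : Fin n) := by
            rw [Fin.le_def]
            show (a : ℕ) ≤ k - 1
            omega
          have htb : (⟨k - 1, hklt⟩ : Fin n) < b := by
            rw [Fin.lt_def]
            show k - 1 < (b : ℕ)
            omega
          have hstr := hstrict ⟨k - 1, hklt⟩ hat htb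
          have hkt : ((⟨k - 1, hklt⟩ : Fin n) : ℕ) + 1 = k := by
            show k - 1 + 1 = k
            omega
          rw [hkt] at hstr
          have := hsum_r k hrk hsk
          omega
      · rw [hsum_nr k hrk]
        exact hP k hk
    have htotlam' : ∑ i, lam' i = ∑ i, lam i := by
      have := hsum_rs n r.isLt s.isLt
      rwa [fstK_univ] at this
    set γ' : Fin n → ℕ := fun x => lam' x.rev with hγ'def
    have hγ'm : Monotone γ' := fun x y hxy => hlam'_anti (Fin.rev_le_rev.mpr hxy)
    have hγlam : ∀ x, γ x = lam x.rev := fun x => by simp [hlamdef]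
    have hγsrev : γ s.rev = lam b := by rw [hγlam s.rev, Fin.rev_rev, hlams]
    have hγrrev : γ r.rev = lam a := by rw [hγlam r.rev, Fin.rev_rev, hlamr]
    have hsrne : s.rev ≠ r.rev := fun h => hrs_ne (Fin.rev_injective h).symm
    have hstep : KeyStep n γ γ' := by
      refine ⟨s.rev, r.rev, Fin.rev_lt_rev.mpr hrs, Or.inr ⟨?_, ?_⟩⟩
      · rw [hγsrev, hγrrev]
        omega
      · funext x
        by_cases hxr : x = r.rev
        · subst hxr
          rw [Function.update_self]
          show lam' r.rev.rev = γ r.rev - 1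
          rw [Fin.rev_rev, hlam'r, hγrrev]
        · rw [Function.update_of_ne hxr]
          by_cases hxs : x = s.rev
          · subst hxs
            rw [Function.update_self]
            show lam' s.rev.rev = γ s.rev + 1
            rw [Fin.rev_rev, hlam's, hγsrev]
          · rw [Function.update_of_ne hxs]
            show lam' x.rev = γ x
            have h1 : x.rev ≠ r := fun h => hxr (by rw [← h, Fin.rev_rev])
            have h2 : x.rev ≠ s := fun h => hxs (by rw [← h, Fin.rev_rev])
            rw [hlam'o x.rev h1 h2, ← hγlam x]
    have hγ'lam' : lam' ∘ ⇑Fin.revPerm = γ' := by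
      funext x
      simp [hγ'def]
    have hpFγ' : ∀ k, k ≤ n → pF γ' k = ∑ i ∈ fstK n k, lam' i := by
      intro k hk
      rw [← hγ'lam', pF_comp_perm, pF_antitone hlam'_anti hk]
    have hpFβγ' : ∀ k, pF β k ≤ pF γ' k := by
      intro k
      rcases le_or_gt k n with hk | hk
      · rw [hpFγ' k hk, ← hpFμ k, pF_antitone hμ_anti hk]
        exact hμlam' k hk
      · rw [pF_gt hk, pF_gt hk]
    have hsumγ' : ∑ i, γ' i = ∑ i, γ i := by
      have h1 : ∑ i, γ' i = ∑ i, lam' i := by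
        rw [← hγ'lam']
        simpa using Equiv.sum_comp Fin.revPerm lam'
      rw [h1, htotlam', hsumlam]
    have hΦlt : ∑ k ∈ Finset.range (n + 1), pF γ' k
        < ∑ k ∈ Finset.range (n + 1), pF γ k := by
      apply Finset.sum_lt_sum
      · intro k hkmem
        rw [Finset.mem_range] at hkmem
        have hk : k ≤ n := by omega
        rw [hpFγ' k hk, ← hpFlam k, pF_antitone hlam_anti hk]
        by_cases hrk : (r : ℕ) < k
        · by_cases hsk : (s : ℕ) < k
          · rw [hsum_rs k hrk hsk]
          · have := hsum_r k hrk hsk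
            omega
        · rw [hsum_nr k hrk]
      · refine ⟨(r : ℕ) + 1, ?_, ?_⟩
        · rw [Finset.mem_range]
          have := r.isLt
          omega
        · have hk : (r : ℕ) + 1 ≤ n := r.isLt
          rw [hpFγ' _ hk, ← hpFlam _, pF_antitone hlam_anti hk]
          have hrsv : (r : ℕ) < (s : ℕ) := Fin.lt_def.mp hrs
          have h1 := hsum_r ((r : ℕ) + 1) (by omega) (by omega)
          omega
    have hΦγ' : ∑ k ∈ Finset.range (n + 1), pF γ' k < N := lt_of_lt_of_le hΦlt hΦ
    have hrec : KeyLe n β γ' := by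
      refine ih _ hΦγ' γ' β hγ'm hpFβγ' ?_ le_rfl
      rw [hsumγ']
      exact hsum
    exact Relation.ReflTransGen.head hstep hrec


lemma fstK_zero : fstK n 0 = ∅ := by
  ext x; simp [mem_fstK]

lemma keyLe_dom {α β : Fin n → ℕ} (h : KeyLe n β α) :
    (∀ k, pF β k ≤ pF α k) ∧ ∑ i, β i = ∑ i, α i := by
  induction h with
  | refl => exact ⟨fun k => le_rfl, rfl⟩
  | tail hab hbc ih =>
    exact ⟨fun k => le_trans (keyStep_pF hbc k) (ih.1 k),
      by rw [keyStep_sum hbc, ih.2]⟩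

/-- For a weakly increasing composition `α` with decreasing rearrangement `lam`,
one has `β ≤_κ α` if and only if `β` is a rearrangement of some partition `μ` with
`μ ⊴ lam` in the dominance order. -/
theorem keyLe_iff_rearrangement_dominated (n : ℕ) (hn : 1 ≤ n)
    (α : Fin n → ℕ) (hα : Monotone α)
    (lam : Fin n → ℕ) (hlam : Antitone lam)
    (hre : ∃ σ : Equiv.Perm (Fin n), lam = α ∘ σ)
    (β : Fin n → ℕ) :
    KeyLe n β α ↔
      ∃ μ : Fin n → ℕ, Antitone μ ∧ Dominates n μ lam ∧
        ∃ σ : Equiv.Perm (Fin n), β = μ ∘ σ := by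
  obtain ⟨σ₁, hσ₁⟩ := hre
  have hpFlam : ∀ k, pF lam k = pF α k := by
    intro k; rw [hσ₁, pF_comp_perm]
  have hsumlam : ∑ i, lam i = ∑ i, α i := by
    rw [hσ₁]; exact Equiv.sum_comp σ₁ α
  constructor
  · intro h
    have hDom := keyLe_dom h
    set μ : Fin n → ℕ := fun k => (β ∘ ⇑(Tuple.sort β)) k.rev with hμdef
    have hμ_anti : Antitone μ := fun x y hxy =>
      (Tuple.monotone_sort β) (Fin.rev_le_rev.mpr hxy)
    set σ₀ : Equiv.Perm (Fin n) := ((Tuple.sort β).symm).trans Fin.revPerm with hσ₀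
    have hβμ : β = μ ∘ ⇑σ₀ := by
      funext x
      simp [hμdef, hσ₀, Fin.rev_rev]
    have hpFμ : ∀ k, pF μ k = pF β k := by
      intro k
      conv_rhs => rw [hβμ]
      rw [pF_comp_perm]
    have hsumμ : ∑ i, μ i = ∑ i, β i := by
      conv_rhs => rw [hβμ]
      exact (Equiv.sum_comp σ₀ μ).symm
    refine ⟨μ, hμ_anti, ⟨?_, ?_⟩, σ₀, hβμ⟩
    · intro i
      rw [Iic_eq_fstK i, ← pF_antitone hμ_anti i.isLt, ← pF_antitone hlam i.isLt,
        hpFμ, hpFlam]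
      exact hDom.1 _
    · rw [hsumμ, hDom.2, ← hsumlam]
  · rintro ⟨μ, hμanti, ⟨hdom1, hdom2⟩, σ, rfl⟩
    have hpFle : ∀ k, pF (μ ∘ ⇑σ) k ≤ pF α k := by
      intro k
      rw [pF_comp_perm, ← hpFlam]
      rcases le_or_gt k n with hk | hk
      · rw [pF_antitone hμanti hk, pF_antitone hlam hk]
        rcases Nat.eq_zero_or_pos k with rfl | hk1
        · simp [fstK_zero]
        · have hklt : k - 1 < n := by omega
          have h1 := hdom1 ⟨k - 1, hklt⟩
          rw [Iic_eq_fstK] at h1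
          have h2 : ((⟨k - 1, hklt⟩ : Fin n) : ℕ) + 1 = k := by
            show k - 1 + 1 = k
            omega
          rwa [h2] at h1
      · rw [pF_gt hk, pF_gt hk]
    have hsum : ∑ i, (μ ∘ ⇑σ) i = ∑ i, α i := by
      have h1 : ∑ i, (μ ∘ ⇑σ) i = ∑ i, μ i := Equiv.sum_comp σ μ
      rw [h1, hdom2, hsumlam]
    exact main_reach _ α (μ ∘ ⇑σ) hα hpFle hsum le_rfl
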